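/- Let f be Φ-uniformly convex on [a,b] with Φ ≥ 0, and suppose p₁/q₁ = m ≤ p₂/q₂ with pᵢ ≥ 0, qᵢ > 0, p₁+p₂ = q₁+q₂ = 1. Then p₁f(a)+p₂f(b) − f(p₁a+p₂b) − m·(q₁f(a)+q₂f(b) − f(q₁a+q₂b)) ≥ m(1−m)·Φ(q₁(b−a)). -/

import Mathlib

theorem stmt16 {a b : ℝ} (hab : a ≤ b) {f Φ : ℝ → ℝ}
    (hΦpos : ∀ t ∈ Set.Icc 0 (b - a), 0 ≤ Φ t)
    (huc : ∀ x ∈ Set.Icc a b, ∀ y ∈ Set.Icc a b, ∀ t ∈ Set.Icc (0 : ℝ) 1,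
      t * f x + (1 - t) * f y ≥ f (t * x + (1 - t) * y) + t * (1 - t) * Φ |x - y|)
    (p₁ p₂ q₁ q₂ m : ℝ) (hp₁ : 0 ≤ p₁) (hp₂ : 0 ≤ p₂) (hq₁ : 0 < q₁) (hq₂ : 0 < q₂)
    (hp : p₁ + p₂ = 1) (hq : q₁ + q₂ = 1)
    (hm : m = p₁ / q₁) (hmle : p₁ / q₁ ≤ p₂ / q₂) :
    p₁ * f a + p₂ * f b - f (p₁ * a + p₂ * b) -
      m * (q₁ * f a + q₂ * f b - f (q₁ * a + q₂ * b)) ≥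
    m * (1 - m) * Φ (q₁ * (b - a)) := by
  have hba : 0 ≤ b - a := sub_nonneg.2 hab
  have hp1m : p₁ = m * q₁ := by rw [hm, div_mul_cancel₀ _ hq₁.ne']
  have hm0 : 0 ≤ m := hm ▸ div_nonneg hp₁ hq₁.le
  have hp2m : m * q₂ ≤ p₂ := by
    have h : m ≤ p₂ / q₂ := hm ▸ hmle
    calc m * q₂ ≤ (p₂ / q₂) * q₂ := by nlinarith
    _ = p₂ := by field_simp
  have hm1 : m ≤ 1 := by nlinarith
  have e1 : q₁ * a + q₂ * b - a = q₂ * (b - a) := by linear_combination a * hq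
  have e2 : b - (q₁ * a + q₂ * b) = q₁ * (b - a) := by linear_combination (-b) * hq
  have hQ : q₁ * a + q₂ * b ∈ Set.Icc a b := by
    constructor
    · nlinarith [mul_nonneg hq₂.le hba, e1]
    · nlinarith [mul_nonneg hq₁.le hba, e2]
  have hb : b ∈ Set.Icc a b := ⟨hab, le_refl b⟩
  have key := huc (q₁ * a + q₂ * b) hQ b hb m ⟨hm0, hm1⟩
  have habs : |q₁ * a + q₂ * b - b| = q₁ * (b - a) := by
    rw [abs_of_nonpos (by nlinarith [mul_nonneg hq₁.le hba, e2])]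
    linear_combination (-b) * hq
  rw [habs] at key
  have harg : m * (q₁ * a + q₂ * b) + (1 - m) * b = p₁ * a + p₂ * b := by
    have hp2 : p₂ = 1 - m * q₁ := by linarith [hp1m]
    rw [hp2, hp1m]; linear_combination m * b * hq
  rw [harg] at key
  have hfinal : p₁ * f a + p₂ * f b - f (p₁ * a + p₂ * b) -
      m * (q₁ * f a + q₂ * f b - f (q₁ * a + q₂ * b)) =
      m * f (q₁ * a + q₂ * b) + (1 - m) * f b - f (p₁ * a + p₂ * b) := by
    linear_combination (f a - f b) * hp1m + f b * hp - m * f b * hq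
  rw [hfinal]
  linarith [key]
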